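/- On ℂ²⊗ℂ², the operators M₀=|−⟩⟨−|⊗|0⟩⟨0|, M₁=|−⟩⟨−|⊗|1⟩⟨1|, M₊=M₋=0, M_?=|+⟩⟨+|⊗𝟙 form a POVM satisfying the error-free condition ⟨φⱼ|Mᵢ|φⱼ⟩=0 for all i≠j in {0,1,+,−}, where |φ₀⟩=|00⟩, |φ₁⟩=|01⟩, |φ₊⟩=|+⟩⊗|+⟩, |φ₋⟩=|+⟩⊗|−⟩, and its success probability for priors η₀=η₁=γ/(2(1+γ)), η₊=η₋=1/(2(1+γ)) equals γ/(2(1+γ)). -/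

import Mathlib

open Matrix Complex
open scoped Matrix Kronecker ComplexOrder

noncomputable section

abbrev Q2 := Fin 2 → ℂ
abbrev V4 := Fin 2 × Fin 2 → ℂ
abbrev Op2 := Matrix (Fin 2) (Fin 2) ℂ
abbrev Op4 := Matrix (Fin 2 × Fin 2) (Fin 2 × Fin 2) ℂ

def ket0 : Q2 := ![1, 0]
def ket1 : Q2 := ![0, 1]
def ketP : Q2 := (Real.sqrt 2 : ℂ)⁻¹ • (ket0 + ket1)
def ketM : Q2 := (Real.sqrt 2 : ℂ)⁻¹ • (ket0 - ket1)

/-- tensor product of two qubit vectors -/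
def tens (a b : Q2) : V4 := fun p => a p.1 * b p.2

/-- rank-one projector |v⟩⟨v| on one qubit -/
def proj2 (v : Q2) : Op2 := Matrix.of fun i j => v i * star (v j)

/-- rank-one operator |v⟩⟨v| on two qubits -/
def proj (v : V4) : Op4 := Matrix.of fun i j => v i * star (v j)

/-- inner product ⟨u|v⟩ -/
def ip4 (u v : V4) : ℂ := star u ⬝ᵥ v

/-- expectation value ⟨u|M|u⟩ -/
def expVal (u : V4) (M : Op4) : ℂ := star u ⬝ᵥ (M *ᵥ u)

-- Bell states
def PhiP : V4 := (Real.sqrt 2 : ℂ)⁻¹ • (tens ket0 ket0 + tens ket1 ket1)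
def PhiM : V4 := (Real.sqrt 2 : ℂ)⁻¹ • (tens ket0 ket0 - tens ket1 ket1)
def PsiP : V4 := (Real.sqrt 2 : ℂ)⁻¹ • (tens ket0 ket1 + tens ket1 ket0)
def PsiM : V4 := (Real.sqrt 2 : ℂ)⁻¹ • (tens ket0 ket1 - tens ket1 ket0)

-- Example 1 states
def φ0 : V4 := tens ket0 ket0
def φ1 : V4 := tens ket0 ket1
def φP : V4 := tens ketP ketP
def φM : V4 := tens ketM ketM

-- Example 1 reciprocal vectors
def φt0 : V4 := (Real.sqrt 2 : ℂ) • PhiM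
def φt1 : V4 := (Real.sqrt 2 : ℂ) • PsiM
def φtP : V4 := (Real.sqrt 2 : ℂ) • tens ket1 ketP
def φtM : V4 := -((Real.sqrt 2 : ℂ) • tens ket1 ketM)

-- Example 2 states
def ψ0 : V4 := tens ket0 ket0
def ψ1 : V4 := tens ket0 ket1
def ψP : V4 := tens ketP ketP
def ψM : V4 := tens ketP ketM

-- Example 2 reciprocal vectors
def ψt0 : V4 := (Real.sqrt 2 : ℂ) • tens ketM ket0
def ψt1 : V4 := (Real.sqrt 2 : ℂ) • tens ketM ket1
def ψtP : V4 := (Real.sqrt 2 : ℂ) • tens ket1 ketP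
def ψtM : V4 := (Real.sqrt 2 : ℂ) • tens ket1 ketM

/-- prior probabilities η₀=η₁=γ/(2(1+γ)), η₊=η₋=1/(2(1+γ)) -/
def η (γ : ℝ) : Fin 4 → ℝ :=
  ![γ / (2 * (1 + γ)), γ / (2 * (1 + γ)), 1 / (2 * (1 + γ)), 1 / (2 * (1 + γ))]


lemma mulVec_proj (v : V4) (x : V4) : proj v *ᵥ x = (star v ⬝ᵥ x) • v := by
  ext i
  simp only [proj, Matrix.mulVec, dotProduct, Matrix.of_apply, Pi.smul_apply, smul_eq_mul,
    Finset.sum_mul, Pi.star_apply]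
  exact Finset.sum_congr rfl fun j _ => by ring

lemma expVal_proj (v u : V4) :
    expVal u (proj v) = (star v ⬝ᵥ u) * star (star v ⬝ᵥ u) := by
  rw [expVal, mulVec_proj, dotProduct_smul, smul_eq_mul]
  have h : star (star v ⬝ᵥ u) = star u ⬝ᵥ v := by
    simp only [dotProduct, star_sum, star_mul', star_star, Pi.star_apply]
    exact Finset.sum_congr rfl fun j _ => by ring
  rw [h, mul_comm]

lemma psd_proj (v : V4) : (proj v).PosSemidef := by
  refine Matrix.PosSemidef.of_dotProduct_mulVec_nonneg ?_ ?_
  · ext i j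
    simp [proj, Matrix.conjTranspose_apply, mul_comm]
  · intro x
    rw [show star x ⬝ᵥ (proj v *ᵥ x) = expVal x (proj v) from rfl, expVal_proj]
    exact mul_star_self_nonneg _

lemma kron_proj (a b : Q2) : proj2 a ⊗ₖ proj2 b = proj (tens a b) := by
  ext ⟨i,k⟩ ⟨j,l⟩
  simp [proj, proj2, tens, Matrix.kroneckerMap_apply]
  ring

lemma one_eq : (1 : Op2) = proj2 ket0 + proj2 ket1 := by
  ext i j
  fin_cases i <;> fin_cases j <;> simp [proj2, ket0, ket1, Matrix.one_apply]

lemma h2c : (Real.sqrt 2 : ℂ) * (Real.sqrt 2 : ℂ) = 2 := by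
  rw [← Complex.ofReal_mul, Real.mul_self_sqrt (by norm_num)]
  norm_num

lemma hinv : ((Real.sqrt 2 : ℂ))⁻¹ * ((Real.sqrt 2 : ℂ))⁻¹ = 1/2 := by
  rw [← mul_inv, h2c]
  norm_num

/-- M₀=|−⟩⟨−|⊗|0⟩⟨0|, M₁=|−⟩⟨−|⊗|1⟩⟨1|, M₊=M₋=0, M_?=|+⟩⟨+|⊗𝟙 is an
unambiguous POVM for Example 2 with success probability γ/(2(1+γ)). -/
theorem stmt_10 (γ : ℝ) (hγ : 2 ≤ γ) :
    (proj2 ketM ⊗ₖ proj2 ket0).PosSemidef ∧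
    (proj2 ketM ⊗ₖ proj2 ket1).PosSemidef ∧
    (proj2 ketP ⊗ₖ (1 : Op2)).PosSemidef ∧
    proj2 ketM ⊗ₖ proj2 ket0 + proj2 ketM ⊗ₖ proj2 ket1 + 0 + 0
      + proj2 ketP ⊗ₖ (1 : Op2) = 1 ∧
    (∀ i j : Fin 4, i ≠ j →
      expVal (![ψ0, ψ1, ψP, ψM] j)
        (![proj2 ketM ⊗ₖ proj2 ket0, proj2 ketM ⊗ₖ proj2 ket1, 0, 0] i) = 0) ∧
    (∑ i : Fin 4, ((η γ i : ℝ) : ℂ) *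
        expVal (![ψ0, ψ1, ψP, ψM] i)
          (![proj2 ketM ⊗ₖ proj2 ket0, proj2 ketM ⊗ₖ proj2 ket1, 0, 0] i))
      = ((γ / (2 * (1 + γ)) : ℝ) : ℂ) := by
  have ipc : ∀ (a b : Q2) (u : V4), star (tens a b) ⬝ᵥ u
      = ∑ i : Fin 2, ∑ j : Fin 2, star (a i) * star (b j) * u (i, j) := by
    intro a b u
    rw [dotProduct, Fintype.sum_prod_type]
    exact Finset.sum_congr rfl fun i _ => Finset.sum_congr rfl fun j _ => by
      simp [tens, Pi.star_apply]
  have ip0 : star (tens ketM ket0) ⬝ᵥ ψ0 = (Real.sqrt 2 : ℂ)⁻¹ := by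
    simp [ipc, ψ0, tens, ket0, ket1, ketM, Fin.sum_univ_two, Complex.conj_ofReal, map_inv₀]
  have ip1 : star (tens ketM ket1) ⬝ᵥ ψ1 = (Real.sqrt 2 : ℂ)⁻¹ := by
    simp [ipc, ψ1, tens, ket0, ket1, ketM, Fin.sum_univ_two, Complex.conj_ofReal, map_inv₀]
  have e0 : ∀ u : V4, expVal u 0 = 0 := by
    intro u; simp [expVal]
  have key : ∀ (a b : Q2) (u : V4), star (tens a b) ⬝ᵥ u = 0 →
      expVal u (proj2 a ⊗ₖ proj2 b) = 0 := by
    intro a b u h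
    rw [kron_proj, expVal_proj, h, zero_mul]
  refine ⟨?_, ?_, ?_, ?_, ?_, ?_⟩
  · rw [kron_proj]; exact psd_proj _
  · rw [kron_proj]; exact psd_proj _
  · rw [one_eq, Matrix.kroneckerMap_add_right _ (fun a b c => mul_add a b c), kron_proj,
      kron_proj]
    exact (psd_proj _).add (psd_proj _)
  · ext ⟨i,k⟩ ⟨j,l⟩
    fin_cases i <;> fin_cases j <;> fin_cases k <;> fin_cases l <;>
      simp [proj2, ket0, ket1, ketP, ketM, Matrix.kroneckerMap_apply, Matrix.one_apply,
        Complex.conj_ofReal, map_inv₀, hinv, Prod.ext_iff] <;>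
      first
        | (rw [if_neg (by decide)])
        | (ring_nf <;> simp [hinv] <;> ring)
  · intro i j hij
    have c1 : star (tens ketM ket0) ⬝ᵥ ψ1 = 0 := by
      simp [ipc, ψ1, tens, ket0, ket1, ketM, Fin.sum_univ_two, Complex.conj_ofReal, map_inv₀]
    have cP : star (tens ketM ket0) ⬝ᵥ ψP = 0 := by
      simp [ipc, ψP, tens, ket0, ket1, ketP, ketM, Fin.sum_univ_two, Complex.conj_ofReal,
        map_inv₀]
    have cM : star (tens ketM ket0) ⬝ᵥ ψM = 0 := by
      simp [ipc, ψM, tens, ket0, ket1, ketP, ketM, Fin.sum_univ_two, Complex.conj_ofReal,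
        map_inv₀]
    have d0 : star (tens ketM ket1) ⬝ᵥ ψ0 = 0 := by
      simp [ipc, ψ0, tens, ket0, ket1, ketM, Fin.sum_univ_two, Complex.conj_ofReal, map_inv₀]
    have dP : star (tens ketM ket1) ⬝ᵥ ψP = 0 := by
      simp [ipc, ψP, tens, ket0, ket1, ketP, ketM, Fin.sum_univ_two, Complex.conj_ofReal,
        map_inv₀]
    have dM : star (tens ketM ket1) ⬝ᵥ ψM = 0 := by
      simp [ipc, ψM, tens, ket0, ket1, ketP, ketM, Fin.sum_univ_two, Complex.conj_ofReal,
        map_inv₀]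
    fin_cases i <;> fin_cases j
    · exact absurd rfl hij
    · exact key _ _ _ c1
    · exact key _ _ _ cP
    · exact key _ _ _ cM
    · exact key _ _ _ d0
    · exact absurd rfl hij
    · exact key _ _ _ dP
    · exact key _ _ _ dM
    · exact e0 _
    · exact e0 _
    · exact e0 _
    · exact e0 _
    · exact e0 _
    · exact e0 _
    · exact e0 _
    · exact e0 _
  · have h0 : expVal ψ0 (proj2 ketM ⊗ₖ proj2 ket0) = 1/2 := by
      rw [kron_proj, expVal_proj, ip0]
      simp [Complex.conj_ofReal, map_inv₀, hinv]
    have h1 : expVal ψ1 (proj2 ketM ⊗ₖ proj2 ket1) = 1/2 := by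
      rw [kron_proj, expVal_proj, ip1]
      simp [Complex.conj_ofReal, map_inv₀, hinv]
    have hγ' : (1 + γ : ℝ) ≠ 0 := by linarith
    rw [Fin.sum_univ_four]
    simp [h0, h1, η, e0]
    push_cast
    field_simp
    ring
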